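/- Let G be a strongly topologically orderable gyrogroup and D a discrete subset of G. Then the points of D can be separated by pairwise disjoint open neighborhoods: there exists a family {U_x : x ∈ D} of open sets with x ∈ U_x and U_x ∩ U_y = ∅ for distinct x, y ∈ D. -/
import Mathlib


open Set Topology

universe u

class Gyrogroup (G : Type u) where
  op : G → G → G
  one : G
  inv : G → G
  gyr : G → G → G ≃ G
  one_op : ∀ g, op one g = g
  op_one : ∀ g, op g one = g
  inv_op : ∀ g, op (inv g) g = one
  op_inv : ∀ g, op g (inv g) = one
  unique_one : ∀ e : G, (∀ g, op e g = g ∧ op g e = g) → e = one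
  unique_inv : ∀ g h : G, (op h g = one ∧ op g h = one) → h = inv g
  gyr_op : ∀ g h f, op g (op h f) = op (op g h) (gyr g h f)
  gyr_hom : ∀ g h a b, gyr g h (op a b) = op (gyr g h a) (gyr g h b)
  loop : ∀ g h, gyr g h = gyr (op g h) h

namespace Gyrogroup

variable {G : Type u} [Gyrogroup G]

/-- `H` is a subgyrogroup: nonempty and a gyrogroup under the restricted operations. -/
def IsSubgyrogroup (H : Set G) : Prop :=
  H.Nonempty ∧ one ∈ H ∧
  (∀ a ∈ H, ∀ b ∈ H, op a b ∈ H) ∧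
  (∀ a ∈ H, inv a ∈ H) ∧
  (∀ a ∈ H, ∀ b ∈ H, Set.BijOn (gyr a b) H H)

/-- `H` is an L-subgyrogroup: `gyr g h` fixes `H` setwise for every `g ∈ G`, `h ∈ H`. -/
def IsLSubgyrogroup (H : Set G) : Prop :=
  IsSubgyrogroup H ∧ ∀ g : G, ∀ h ∈ H, (gyr g h) '' H = H

def leftCoset (a : G) (H : Set G) : Set G := (fun h => op a h) '' H

/-- The subgyrogroup generated by `S`. -/
def generatedSubgyrogroup (S : Set G) : Set G :=
  ⋂₀ {H : Set G | IsSubgyrogroup H ∧ S ⊆ H}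

/-- The gyrogroup operations are continuous (topological gyrogroup). -/
def ContinuousGyroOps (G : Type u) [Gyrogroup G] [TopologicalSpace G] : Prop :=
  Continuous (fun p : G × G => op p.1 p.2) ∧ Continuous (inv : G → G)

/-- The topology coincides with the order topology of some linear order. -/
def TopologicallyOrderable (G : Type u) [t : TopologicalSpace G] : Prop :=
  ∃ l : LinearOrder G, t = TopologicalSpace.generateFrom
      {s : Set G | ∃ a : G, s = {x | l.lt a x} ∨ s = {x | l.lt x a}}

/-- A strongly topological gyrogroup: a topological gyrogroup with a neighborhood base
at `1` whose members are invariant under all gyroautomorphisms. -/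
def StronglyTopologicalGyrogroup (G : Type u) [Gyrogroup G] [TopologicalSpace G] : Prop :=
  ContinuousGyroOps G ∧
  ∃ 𝒰 : Set (Set G), (∀ U ∈ 𝒰, U ∈ nhds (one : G)) ∧
    (∀ V ∈ nhds (one : G), ∃ U ∈ 𝒰, U ⊆ V) ∧
    (∀ U ∈ 𝒰, ∀ x y : G, (gyr x y) '' U = U)

def StronglyTopologicallyOrderable (G : Type u) [Gyrogroup G] [TopologicalSpace G] : Prop :=
  StronglyTopologicalGyrogroup G ∧ TopologicallyOrderable G

end Gyrogroup

open Gyrogroup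
/-- In a strongly topologically orderable gyrogroup the points of a discrete subset can
be separated by pairwise disjoint open neighborhoods. -/
theorem stmt18 {G : Type u} [Gyrogroup G] [TopologicalSpace G]
    (h : StronglyTopologicallyOrderable G) (D : Set G)
    (hD : ∀ x ∈ D, ∃ U ∈ nhds x, U ∩ D = {x}) :
    ∃ U : G → Set G, (∀ x ∈ D, IsOpen (U x) ∧ x ∈ U x) ∧
      ∀ x ∈ D, ∀ y ∈ D, x ≠ y → Disjoint (U x) (U y) := by
  classical
  obtain ⟨-, l, hl⟩ := h
  letI := l
  haveI : OrderTopology G := ⟨hl⟩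
  choose W hW hWD using hD
  -- convex neighborhoods
  set V : G → Set G := fun x => if hx : x ∈ D then ordConnectedComponent (W x hx) x else ∅
    with hVdef
  have hVx : ∀ x (hx : x ∈ D), V x = ordConnectedComponent (W x hx) x := by
    intro x hx; simp [hVdef, hx]
  have hV1 : ∀ x ∈ D, V x ∈ nhds x := by
    intro x hx
    rw [hVx x hx]
    exact (ordConnectedComponent_mem_nhds).2 (hW x hx)
  have hVmem : ∀ x ∈ D, x ∈ V x := fun x hx => mem_of_mem_nhds (hV1 x hx)
  have hV2 : ∀ x ∈ D, V x ∩ D = {x} := by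
    intro x hx
    apply Subset.antisymm
    · rw [hVx x hx]
      intro z hz
      rw [← hWD x hx]
      exact ⟨ordConnectedComponent_subset hz.1, hz.2⟩
    · intro z hz
      rw [mem_singleton_iff] at hz
      subst hz
      exact ⟨hVmem _ hx, hx⟩
  have hVconv : ∀ x ∈ D, ∀ a ∈ V x, ∀ b ∈ V x, Icc a b ⊆ V x := by
    intro x hx a ha b hb
    rw [hVx x hx] at ha hb ⊢
    exact (inferInstance : OrdConnected (ordConnectedComponent (W x hx) x)).out ha hb
  -- in D, membership in V gives equality
  have hVD : ∀ x ∈ D, ∀ z ∈ D, z ∈ V x → z = x := by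
    intro x hx z hz hzV
    have : z ∈ V x ∩ D := ⟨hzV, hz⟩
    rwa [hV2 x hx, mem_singleton_iff] at this
  -- overlap lies strictly between
  have hsub : ∀ x ∈ D, ∀ y ∈ D, x < y → V x ∩ V y ⊆ Ioo x y := by
    intro x hx y hy hxy z hz
    constructor
    · by_contra hzx
      push_neg at hzx
      have : x ∈ V y := hVconv y hy z hz.2 y (hVmem y hy) ⟨hzx, le_of_lt hxy⟩
      exact absurd (hVD y hy x hx this) (ne_of_lt hxy)
    · by_contra hzy
      push_neg at hzy
      have : y ∈ V x := hVconv x hx x (hVmem x hx) z hz.1 ⟨le_of_lt hxy, hzy⟩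
      exact absurd (hVD x hx y hy this) (ne_of_gt hxy)
  -- no overlap when a point of D lies strictly between
  have hdisj : ∀ x ∈ D, ∀ y ∈ D, ∀ d ∈ D, x < d → d < y → V x ∩ V y = ∅ := by
    intro x hx y hy d hd hxd hdy
    rw [eq_empty_iff_forall_notMem]
    intro z hz
    have hzo : z ∈ Ioo x y := hsub x hx y hy (hxd.trans hdy) hz
    rcases lt_trichotomy z d with hzd | hzd | hzd
    · have : d ∈ V y := hVconv y hy z hz.2 y (hVmem y hy) ⟨le_of_lt hzd, le_of_lt hdy⟩
      exact absurd (hVD y hy d hd this) (ne_of_lt hdy)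
    · subst hzd
      exact absurd (hVD x hx z hd hz.1) (ne_of_gt hxd)
    · have : d ∈ V x := hVconv x hx x (hVmem x hx) z hz.1 ⟨le_of_lt hxd, le_of_lt hzd⟩
      exact absurd (hVD x hx d hd this) (ne_of_gt hxd)
  -- uniqueness of overlapping upper neighbor
  have hupuniq : ∀ x ∈ D, ∀ y ∈ D, ∀ y' ∈ D, x < y → x < y' →
      (V x ∩ V y).Nonempty → (V x ∩ V y').Nonempty → y = y' := by
    intro x hx y hy y' hy' hxy hxy' hne hne'
    rcases lt_trichotomy y y' with hlt | heq | hgt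
    · rw [hdisj x hx y' hy' y hy hxy hlt] at hne'
      exact absurd hne' (not_nonempty_empty)
    · exact heq
    · rw [hdisj x hx y hy y' hy' hxy' hgt] at hne
      exact absurd hne (not_nonempty_empty)
  have hdnuniq : ∀ x ∈ D, ∀ y ∈ D, ∀ y' ∈ D, y < x → y' < x →
      (V y ∩ V x).Nonempty → (V y' ∩ V x).Nonempty → y = y' := by
    intro x hx y hy y' hy' hyx hy'x hne hne'
    rcases lt_trichotomy y y' with hlt | heq | hgt
    · rw [hdisj y hy x hx y' hy' hlt hy'x] at hne
      exact absurd hne (not_nonempty_empty)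
    · exact heq
    · rw [hdisj y' hy' x hx y hy hgt hyx] at hne'
      exact absurd hne' (not_nonempty_empty)
  -- midpoints
  set m : G → G → G := fun a b => if h : (V a ∩ V b).Nonempty then h.some else a with hmdef
  have hm : ∀ a b, (h : (V a ∩ V b).Nonempty) → m a b ∈ V a ∩ V b := by
    intro a b hab
    simp only [hmdef, dif_pos hab]
    exact hab.some_mem
  set Pup : G → Prop := fun x => ∃ y, y ∈ D ∧ x < y ∧ (V x ∩ V y).Nonempty with hPup
  set Pdn : G → Prop := fun x => ∃ y, y ∈ D ∧ y < x ∧ (V y ∩ V x).Nonempty with hPdn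
  set Aup : G → Set G := fun x => if h : Pup x then Iio (m x h.choose) else univ with hAup
  set Adn : G → Set G := fun x => if h : Pdn x then Ioi (m h.choose x) else univ with hAdn
  refine ⟨fun x => interior (V x) ∩ Aup x ∩ Adn x, ?_, ?_⟩
  · intro x hx
    constructor
    · apply IsOpen.inter
      apply IsOpen.inter isOpen_interior
      · rw [hAup]
        by_cases hp : Pup x
        · simp only [dif_pos hp]; exact isOpen_Iio
        · simp only [dif_neg hp]; exact isOpen_univ
      · rw [hAdn]
        by_cases hp : Pdn x
        · simp only [dif_pos hp]; exact isOpen_Ioi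
        · simp only [dif_neg hp]; exact isOpen_univ
    · refine ⟨⟨mem_interior_iff_mem_nhds.2 (hV1 x hx), ?_⟩, ?_⟩
      · rw [hAup]
        by_cases hp : Pup x
        · simp only [dif_pos hp]
          obtain ⟨hyD, hxy, hne⟩ := hp.choose_spec
          have := hm x hp.choose hne
          exact (hsub x hx hp.choose hyD hxy this).1
        · simp only [dif_neg hp]; exact mem_univ x
      · rw [hAdn]
        by_cases hp : Pdn x
        · simp only [dif_pos hp]
          obtain ⟨hyD, hyx, hne⟩ := hp.choose_spec
          have := hm hp.choose x hne
          exact (hsub hp.choose hyD x hx hyx this).2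
        · simp only [dif_neg hp]; exact mem_univ x
  · -- disjointness
    have key : ∀ x ∈ D, ∀ y ∈ D, x < y →
        Disjoint (interior (V x) ∩ Aup x ∩ Adn x) (interior (V y) ∩ Aup y ∩ Adn y) := by
      intro x hx y hy hxy
      rw [Set.disjoint_left]
      intro z hzx hzy
      have hzV : z ∈ V x ∩ V y := ⟨interior_subset hzx.1.1, interior_subset hzy.1.1⟩
      have hne : (V x ∩ V y).Nonempty := ⟨z, hzV⟩
      have hp : Pup x := ⟨y, hy, hxy, hne⟩
      have hq : Pdn y := ⟨x, hx, hxy, hne⟩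
      -- identify the chosen witnesses
      obtain ⟨hy0D, hxy0, hne0⟩ := hp.choose_spec
      have hy0 : hp.choose = y := hupuniq x hx hp.choose hy0D y hy hxy0 hxy hne0 hne
      obtain ⟨hx0D, hx0y, hne0'⟩ := hq.choose_spec
      have hx0 : hq.choose = x := hdnuniq y hy hq.choose hx0D x hx hx0y hxy hne0' hne
      have h1 : z ∈ Aup x := hzx.1.2
      have h2 : z ∈ Adn y := hzy.2
      rw [hAup] at h1
      simp only [dif_pos hp] at h1
      rw [hy0] at h1
      rw [hAdn] at h2
      simp only [dif_pos hq] at h2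
      rw [hx0] at h2
      exact absurd (h1.trans h2) (lt_irrefl z)
    intro x hx y hy hxy
    rcases lt_trichotomy x y with hlt | heq | hgt
    · exact key x hx y hy hlt
    · exact absurd heq hxy
    · exact (key y hy x hx hgt).symm
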